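/- For 0 < p < ∞ there exist constants c, C > 0 depending only on p such that c·n^{-1/p} ≤ vol(B_p^n)^{1/n} ≤ C·n^{-1/p} for all n ≥ 1, where B_p^n is the unit ball of ℓ_p^n(ℝ). -/

import Mathlib

open MeasureTheory Real Set
open scoped Pointwise

lemma aux_int_Ioi (p : ℝ) (hp : 0 < p) :
    IntegrableOn (fun x : ℝ => exp (-x ^ p)) (Set.Ioi 0) := by
  have h0 : IntegrableOn (fun u : ℝ => u ^ (1 / p - 1) * exp (-u)) (Set.Ioi 0) :=
    (Real.GammaIntegral_convergent (one_div_pos.mpr hp)).congr_fun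
      (fun x hx => by ring) measurableSet_Ioi
  have H := (integrableOn_Ioi_comp_rpow_iff'
      (fun u : ℝ => u ^ (1 / p - 1) * exp (-u)) hp.ne').mpr h0
  refine H.congr_fun (fun x hx => ?_) measurableSet_Ioi
  have hx' : (0:ℝ) < x := hx
  dsimp only; rw [smul_eq_mul, ← Real.rpow_mul hx'.le, ← mul_assoc, ← Real.rpow_add hx']
  rw [show p - 1 + p * (1 / p - 1) = 0 by field_simp; ring, Real.rpow_zero, one_mul]

lemma aux_int (p : ℝ) (hp : 0 < p) :
    Integrable (fun t : ℝ => exp (-|t| ^ p)) := by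
  have hIoi : IntegrableOn (fun t : ℝ => exp (-|t| ^ p)) (Set.Ioi 0) :=
    (aux_int_Ioi p hp).congr_fun (fun x hx => by rw [abs_of_pos hx]) measurableSet_Ioi
  rw [← integrableOn_univ, ← @Iio_union_Ici _ _ (0 : ℝ), integrableOn_union,
    integrableOn_Ici_iff_integrableOn_Ioi]
  refine ⟨?_, hIoi⟩
  rw [← (Measure.measurePreserving_neg (volume : Measure ℝ)).integrableOn_comp_preimage
      (Homeomorph.neg ℝ).measurableEmbedding]
  simp only [Function.comp_def, abs_neg, neg_preimage, neg_Iio, neg_zero]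
  exact hIoi

lemma aux_val (p : ℝ) (hp : 0 < p) :
    ∫ t : ℝ, exp (-|t| ^ p) = 2 * Gamma (1 / p + 1) := by
  rw [integral_comp_abs (f := fun x => exp (-x ^ p)), integral_exp_neg_rpow hp]

lemma aux_lower (p : ℝ) (hp : 0 < p) (n : ℕ) (hn : 1 ≤ n)
    (hfin : volume {x : Fin n → ℝ | ∑ i, |x i| ^ p ≤ 1} ≠ ⊤) :
    1 * (n : ℝ) ^ (-(1 / p)) ≤
      (volume {x : Fin n → ℝ | ∑ i, |x i| ^ p ≤ 1}).toReal ^ ((n : ℝ)⁻¹) := by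
  have hn0 : (n:ℝ) ≠ 0 := Nat.cast_ne_zero.mpr (by omega)
  have hn' : (0:ℝ) < n := by positivity
  set a : ℝ := (n : ℝ) ^ (-(1 / p)) with hadef
  have ha : 0 < a := rpow_pos_of_pos hn' _
  have hap : a ^ p = (n:ℝ)⁻¹ := by
    rw [hadef, ← Real.rpow_mul hn'.le, neg_mul, one_div_mul_cancel hp.ne',
      Real.rpow_neg_one]
  have hQsub : Set.pi univ (fun _ : Fin n => Icc (-a) a) ⊆
      {x : Fin n → ℝ | ∑ i, |x i| ^ p ≤ 1} := by
    intro x hx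
    have : ∀ i, |x i| ^ p ≤ a ^ p := fun i => by
      have := hx i (Set.mem_univ i)
      exact Real.rpow_le_rpow (abs_nonneg _) (abs_le.mpr ⟨this.1, this.2⟩) hp.le
    calc ∑ i, |x i| ^ p ≤ ∑ _i : Fin n, a ^ p := Finset.sum_le_sum fun i _ => this i
      _ = n * a ^ p := by rw [Finset.sum_const, Finset.card_univ, Fintype.card_fin,
        nsmul_eq_mul]
      _ = 1 := by rw [hap, mul_inv_cancel₀ hn0]
  have hvolQ : volume (Set.pi univ (fun _ : Fin n => Icc (-a) a)) =
      ENNReal.ofReal (2 * a) ^ n := by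
    rw [volume_pi_pi]
    simp only [Real.volume_Icc, Finset.prod_const, Finset.card_univ, Fintype.card_fin]
    norm_num [two_mul]
  have hle : (2 * a) ^ n ≤ (volume {x : Fin n → ℝ | ∑ i, |x i| ^ p ≤ 1}).toReal := by
    have h := measure_mono (μ := (volume : Measure (Fin n → ℝ))) hQsub
    rw [hvolQ] at h
    have := ENNReal.toReal_mono hfin h
    rwa [ENNReal.toReal_pow, ENNReal.toReal_ofReal (by positivity)] at this
  have h2a : ((2 * a) ^ n : ℝ) ^ ((n:ℝ)⁻¹) = 2 * a := by
    rw [← Real.rpow_natCast _ n, ← Real.rpow_mul (by positivity),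
      mul_inv_cancel₀ hn0, Real.rpow_one]
  have := Real.rpow_le_rpow (by positivity) hle (by positivity : (0:ℝ) ≤ (n:ℝ)⁻¹)
  rw [h2a] at this
  nlinarith [ha]

lemma aux_upper (p : ℝ) (hp : 0 < p) (n : ℕ) (hn : 1 ≤ n)
    (hfin : volume {x : Fin n → ℝ | ∑ i, |x i| ^ p ≤ 1} ≠ ⊤) :
    (volume {x : Fin n → ℝ | ∑ i, |x i| ^ p ≤ 1}).toReal ≤
      (2 * Gamma (1 / p + 1) * exp (1 / p) * p ^ (1 / p) * (n : ℝ) ^ (-(1 / p))) ^ n := by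
  have hn0 : (n:ℝ) ≠ 0 := Nat.cast_ne_zero.mpr (by omega)
  have hn' : (0:ℝ) < n := by positivity
  set M : ℝ := 2 * Gamma (1 / p + 1) with hMdef
  have hM : 0 < M := by
    have := Real.Gamma_pos_of_pos (show (0:ℝ) < 1 / p + 1 by positivity)
    rw [hMdef]; linarith
  set B := {x : Fin n → ℝ | ∑ i, |x i| ^ p ≤ 1} with hBdef
  have hg : Continuous (fun x : Fin n → ℝ => ∑ i, |x i| ^ p) := by
    refine continuous_finset_sum _ fun i _ => ?_
    exact (continuous_abs.comp (continuous_apply i)).rpow_const (fun x => Or.inr hp.le)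
  set r : ℝ := ((n:ℝ) / p) ^ (1 / p) with hrdef
  have hr : 0 < r := rpow_pos_of_pos (by positivity) _
  have hrp : r ^ p = (n:ℝ) / p := by
    rw [hrdef, ← Real.rpow_mul (by positivity), one_div_mul_cancel hp.ne', Real.rpow_one]
  have hsmul : r • B = {x : Fin n → ℝ | ∑ i, |x i| ^ p ≤ r ^ p} := by
    ext x
    rw [Set.mem_smul_set_iff_inv_smul_mem₀ hr.ne']
    simp only [hBdef, Set.mem_setOf_eq, Pi.smul_apply, smul_eq_mul, abs_mul, abs_inv,
      abs_of_pos hr]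
    have hsum : ∑ i, (r⁻¹ * |x i|) ^ p = (r ^ p)⁻¹ * ∑ i, |x i| ^ p := by
      rw [Finset.mul_sum]
      refine Finset.sum_congr rfl fun i _ => ?_
      rw [Real.mul_rpow (by positivity) (abs_nonneg _), Real.inv_rpow hr.le]
    rw [hsum, inv_mul_le_iff₀ (rpow_pos_of_pos hr p), mul_one]
  have hvol_rB : volume {x : Fin n → ℝ | ∑ i, |x i| ^ p ≤ r ^ p} =
      ENNReal.ofReal (r ^ n) * volume B := by
    rw [← hsmul, Measure.addHaar_smul_of_nonneg volume hr.le B,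
      Module.finrank_fintype_fun_eq_card, Fintype.card_fin]
  have hrBm : MeasurableSet {x : Fin n → ℝ | ∑ i, |x i| ^ p ≤ r ^ p} :=
    (isClosed_le hg continuous_const).measurableSet
  have hrBfin : volume {x : Fin n → ℝ | ∑ i, |x i| ^ p ≤ r ^ p} ≠ ⊤ := by
    rw [hvol_rB]; exact ENNReal.mul_ne_top ENNReal.ofReal_ne_top hfin
  set f : (Fin n → ℝ) → ℝ := fun x => exp (-∑ i, |x i| ^ p) with hfdef
  have hprod : f = fun x => ∏ i, exp (-|x i| ^ p) := by
    funext x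
    rw [hfdef, ← Real.exp_sum]
    simp [Finset.sum_neg_distrib]
  have hfint : Integrable f := by
    rw [hprod]
    exact Integrable.fintype_prod (f := fun (_ : Fin n) (t : ℝ) => exp (-|t| ^ p))
      (fun _ => aux_int p hp)
  have hfval : ∫ x, f x = M ^ n := by
    rw [hprod]
    exact (integral_fintype_prod_eq_pow (ι := Fin n) (fun t : ℝ => exp (-|t| ^ p))).trans (by
      rw [aux_val p hp, Fintype.card_fin, hMdef])
  have key : exp (-((n:ℝ) / p)) * (ENNReal.ofReal (r ^ n) * volume B).toReal ≤ M ^ n := by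
    rw [← hvol_rB, ← hfval]
    calc exp (-((n:ℝ)/p)) * (volume {x : Fin n → ℝ | ∑ i, |x i| ^ p ≤ r ^ p}).toReal
        ≤ ∫ x in {x : Fin n → ℝ | ∑ i, |x i| ^ p ≤ r ^ p}, f x := by
          refine le_of_eq_of_le (by rw [smul_eq_mul, mul_comm]; rfl)
            (setIntegral_ge_of_const_le (c := exp (-((n:ℝ)/p))) hrBm hrBfin (fun x hx => ?_)
              hfint.integrableOn)
          simp only [hfdef]
          exact exp_le_exp.mpr (neg_le_neg (le_of_le_of_eq hx hrp))
      _ ≤ ∫ x, f x := setIntegral_le_integral hfint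
          (Filter.Eventually.of_forall fun x => (exp_pos _).le)
  have hVr : (ENNReal.ofReal (r ^ n) * volume B).toReal = r ^ n * (volume B).toReal := by
    rw [ENNReal.toReal_mul, ENNReal.toReal_ofReal (by positivity)]
  rw [hVr] at key
  have hid : (M * exp (1 / p) * p ^ (1 / p) * (n:ℝ) ^ (-(1/p))) ^ n
      = M ^ n * exp ((n:ℝ)/p) * (r ^ n)⁻¹ := by
    have h1 : p ^ (1/p) * (n:ℝ) ^ (-(1/p)) = r⁻¹ := by
      rw [hrdef, Real.rpow_neg hn'.le, ← Real.inv_rpow hn'.le,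
        ← Real.mul_rpow hp.le (by positivity), ← Real.inv_rpow (by positivity)]
      congr 1
      field_simp
    have h2 : exp (1/p) ^ n = exp ((n:ℝ)/p) := by
      rw [← Real.exp_nat_mul]
      congr 1
      ring
    rw [mul_assoc (M * exp (1/p)), h1, mul_pow, mul_pow, h2, inv_pow]
  rw [hid]
  have hrn : (0:ℝ) < r ^ n := by positivity
  have hee : exp (-((n:ℝ)/p)) * exp ((n:ℝ)/p) = 1 := by
    rw [← Real.exp_add]; simp
  have step : r ^ n * (volume B).toReal ≤ M ^ n * exp ((n:ℝ)/p) := by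
    have h3 := mul_le_mul_of_nonneg_right key (exp_pos ((n:ℝ)/p)).le
    rwa [mul_comm (exp (-((n:ℝ)/p))) _, mul_assoc, hee, mul_one] at h3
  rw [← div_eq_mul_inv, le_div_iff₀ hrn, mul_comm]
  exact step

theorem volume_lp_ball_asymp (p : ℝ) (hp : 0 < p) :
    ∃ c C : ℝ, 0 < c ∧ 0 < C ∧ ∀ n : ℕ, 1 ≤ n →
      c * (n : ℝ) ^ (-(1 / p)) ≤
        (volume {x : Fin n → ℝ | ∑ i, |x i| ^ p ≤ 1}).toReal ^ ((n : ℝ)⁻¹) ∧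
      (volume {x : Fin n → ℝ | ∑ i, |x i| ^ p ≤ 1}).toReal ^ ((n : ℝ)⁻¹) ≤
        C * (n : ℝ) ^ (-(1 / p)) := by
  have hM : 0 < 2 * Gamma (1 / p + 1) := by
    have := Real.Gamma_pos_of_pos (show (0:ℝ) < 1 / p + 1 by positivity)
    linarith
  refine ⟨1, 2 * Gamma (1 / p + 1) * exp (1 / p) * p ^ (1 / p), one_pos, by positivity,
    fun n hn => ?_⟩
  have hn0 : (n:ℝ) ≠ 0 := Nat.cast_ne_zero.mpr (by omega)
  have hn' : (0:ℝ) < n := by positivity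
  have hfin : volume {x : Fin n → ℝ | ∑ i, |x i| ^ p ≤ 1} ≠ ⊤ := by
    have hsub : {x : Fin n → ℝ | ∑ i, |x i| ^ p ≤ 1} ⊆
        Set.pi univ (fun _ : Fin n => Icc (-1:ℝ) 1) := by
      intro x hx i _
      have h1 : |x i| ^ p ≤ 1 :=
        le_trans (Finset.single_le_sum (f := fun j => |x j| ^ p)
          (fun j _ => rpow_nonneg (abs_nonneg _) _) (Finset.mem_univ i)) hx
      have h2 : |x i| ≤ 1 := by
        by_contra h
        push_neg at h
        have := (Real.one_lt_rpow_iff_of_pos (lt_trans one_pos h)).mpr (Or.inl ⟨h, hp⟩)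
        linarith
      exact abs_le.mp h2
    refine ne_top_of_le_ne_top ?_ (measure_mono hsub)
    rw [volume_pi_pi]
    simp only [Real.volume_Icc, Finset.prod_const, Finset.card_univ, Fintype.card_fin]
    exact ENNReal.pow_ne_top ENNReal.ofReal_ne_top
  refine ⟨aux_lower p hp n hn hfin, ?_⟩
  have hupper := aux_upper p hp n hn hfin
  set C : ℝ := 2 * Gamma (1 / p + 1) * exp (1 / p) * p ^ (1 / p) with hCdef
  have hC : 0 < C := by positivity
  set a : ℝ := (n : ℝ) ^ (-(1 / p)) with hadef
  have ha : 0 < a := rpow_pos_of_pos hn' _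
  have hCa : ((C * a) ^ n : ℝ) ^ ((n:ℝ)⁻¹) = C * a := by
    rw [← Real.rpow_natCast _ n, ← Real.rpow_mul (by positivity),
      mul_inv_cancel₀ hn0, Real.rpow_one]
  have := Real.rpow_le_rpow ENNReal.toReal_nonneg hupper
    (by positivity : (0:ℝ) ≤ (n:ℝ)⁻¹)
  rwa [hCa] at this
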